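/- Let G be a non-archimedean CLI Polish group and let 𝒢 = (G_n), 𝒢' = (G_n') ∈ dgnb(G). Then ω(ρ(𝒢)) = ω(ρ(𝒢')). Consequently there is a unique ordinal β < ω₁, independent of the choice of 𝒢 ∈ dgnb(G), with ω(ρ(𝒢)) = ω·β. -/

import Mathlib

noncomputable section

/-- `omegaPart a` is ω(a): the largest limit ordinal `≤ a`, or `0` if there is none. -/
def omegaPart (a : Ordinal) : Ordinal :=
  sSup {b : Ordinal | (b = 0 ∨ (b ≠ 0 ∧ ∀ c < b, Order.succ c < b)) ∧ b ≤ a}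

/-- `IsTree lt` says that the binary relation `lt` on `T` is a tree order: it is irreflexive,
transitive, and the set of predecessors of any node is finite and linearly ordered. -/
def IsTree {T : Type*} (lt : T → T → Prop) : Prop :=
  (∀ s, ¬ lt s s) ∧
  (∀ s t u, lt s t → lt t u → lt s u) ∧
  (∀ s, {t | lt t s}.Finite) ∧
  (∀ s t u, lt t s → lt u s → t = u ∨ lt t u ∨ lt u t)

/-- The length `lh s` of a node of a tree: the number of its strict predecessors. -/
def lh {T : Type*} (lt : T → T → Prop) (s : T) : ℕ :=
  Nat.card {t | lt t s}

/-- The rank `ρ(T)` of a tree `(T, lt)`: for a well-founded tree it is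
`sup { ρ_T(s) + 1 : s ∈ T }` where `ρ_T(s) = sup { ρ_T(t) + 1 : s < t }`;
for an ill-founded tree we use the junk value `0`. -/
def rhoRel {T : Type u} (lt : T → T → Prop) : Ordinal.{u} :=
  letI := Classical.dec (WellFounded (Function.swap lt))
  if h : WellFounded (Function.swap lt) then ⨆ s : T, Order.succ ((h.apply s).rank) else 0

/-- The nodes of the tree `T_ℰ^X` associated to a sequence `E` of (equivalence) relations
on `X`: pairs `(n, C)` where `C` is a non-singleton class `[x]_{E n}`. -/
def TreeNode (X : Type u) (E : ℕ → X → X → Prop) : Type u :=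
  {p : ℕ × Set X // ∃ x : X, p.2 = {y | E p.1 x y} ∧ p.2 ≠ {x}}

/-- The tree order on `T_ℰ^X`: `(n, C) < (m, D)` iff `n < m` and `C ⊇ D`. -/
def nodeLT {X : Type u} (E : ℕ → X → X → Prop) :
    TreeNode X E → TreeNode X E → Prop :=
  fun s t => s.1.1 < t.1.1 ∧ t.1.2 ⊆ s.1.2

/-- The tree `T_ℰ^X` is well-founded: no infinite strictly increasing sequence. -/
def TreeWF (X : Type u) (E : ℕ → X → X → Prop) : Prop :=
  WellFounded (Function.swap (nodeLT E))

/-- The rank `ρ(T_ℰ^X)`. -/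
def treeRho (X : Type u) (E : ℕ → X → X → Prop) : Ordinal.{u} :=
  rhoRel (nodeLT E)

/-- A Polish group: a topological group whose topology is Polish. -/
def IsPolishGroup (G : Type u) [Group G] [TopologicalSpace G] : Prop :=
  IsTopologicalGroup G ∧ PolishSpace G

/-- A topological group is non-archimedean if the open subgroups form a
neighborhood base of the identity. -/
def IsNonArch (G : Type u) [Group G] [TopologicalSpace G] : Prop :=
  ∀ U ∈ nhds (1 : G), ∃ H : Subgroup G, IsOpen (H : Set G) ∧ (H : Set G) ⊆ U

/-- A topological group is CLI if it admits a compatible complete left-invariant metric. -/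
def IsCLI (G : Type u) [Group G] [TopologicalSpace G] : Prop :=
  ∃ m : MetricSpace G,
    m.toUniformSpace.toTopologicalSpace = ‹TopologicalSpace G› ∧
    @CompleteSpace G m.toUniformSpace ∧
    ∀ g h k : G, m.dist (g * h) (g * k) = m.dist h k

/-- A topological group is TSI if it admits a compatible complete two-sided-invariant metric. -/
def IsTSI (G : Type u) [Group G] [TopologicalSpace G] : Prop :=
  ∃ m : MetricSpace G,
    m.toUniformSpace.toTopologicalSpace = ‹TopologicalSpace G› ∧
    @CompleteSpace G m.toUniformSpace ∧
    ∀ g h k : G, m.dist (g * h) (g * k) = m.dist h k ∧ m.dist (h * g) (k * g) = m.dist h k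

/-- `Dgnb G` is the set `dgnb(G)`: decreasing sequences `(G_n)` of open subgroups of `G`
with `G_0 = G` forming a neighborhood base of `1_G`. -/
structure Dgnb (G : Type u) [Group G] [TopologicalSpace G] where
  seq : ℕ → Subgroup G
  isOpen : ∀ n, IsOpen ((seq n : Set G))
  antitone : ∀ n, seq (n + 1) ≤ seq n
  zero_eq_top : seq 0 = ⊤
  basis : ∀ U ∈ nhds (1 : G), ∃ n, ((seq n : Set G)) ⊆ U

/-- The orbit equivalence relation of (the action of) a subgroup `H ≤ G` on a `G`-space `X`:
`x ∼ y` iff `g • x = y` for some `g ∈ H`. -/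
def subOrbit {G : Type u} [Group G] (H : Subgroup G) (X : Type v) [MulAction G X] :
    X → X → Prop :=
  fun x y => ∃ g ∈ H, g • x = y

/-- The tree `T_𝒢^X` of a `𝒢 ∈ dgnb(G)` and a `G`-space `X`: nodes are pairs `(n, C)`
with `C` a non-singleton `G_n`-orbit. We record it by its defining sequence of relations. -/
def dgnbRel {G : Type u} [Group G] [TopologicalSpace G] (𝒢 : Dgnb G) (X : Type v)
    [MulAction G X] : ℕ → X → X → Prop :=
  fun n => subOrbit (𝒢.seq n) X

/-- `ρ^k(𝒢) = ρ(T_𝒢^{G/G_k})`, where `G` acts by left translation on `G/G_k`. -/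
def rhoK {G : Type u} [Group G] [TopologicalSpace G] (𝒢 : Dgnb G) (k : ℕ) : Ordinal.{u} :=
  treeRho (G ⧸ 𝒢.seq k) (dgnbRel 𝒢 (G ⧸ 𝒢.seq k))

/-- `ρ(𝒢) = ρ(T_𝒢^{X(𝒢)})` where `X(𝒢) = ⊔_k G/G_k` is the disjoint union of the coset
spaces, with `G` acting by left translation on each summand. -/
def rhoDgnb {G : Type u} [Group G] [TopologicalSpace G] (𝒢 : Dgnb G) : Ordinal.{u} :=
  treeRho (Σ k : ℕ, G ⧸ 𝒢.seq k)
    (fun n p q => ∃ g ∈ 𝒢.seq n, q = ⟨p.1, g • p.2⟩)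

/-- `G` is α-CLI if `ρ(𝒢) ≤ ω·α` for any (equivalently, some) `𝒢 ∈ dgnb(G)`. -/
def IsAlphaCLI (G : Type u) [Group G] [TopologicalSpace G] (α : Ordinal.{u}) : Prop :=
  ∀ 𝒢 : Dgnb G, rhoDgnb 𝒢 ≤ Ordinal.omega0 * α

/-- `G` is L-α-CLI if `rank(G) ≤ α`, i.e. `ω(ρ(𝒢)) ≤ ω·α` for any (equivalently, some)
`𝒢 ∈ dgnb(G)`. -/
def IsLAlphaCLI (G : Type u) [Group G] [TopologicalSpace G] (α : Ordinal.{u}) : Prop :=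
  ∀ 𝒢 : Dgnb G, omegaPart (rhoDgnb 𝒢) ≤ Ordinal.omega0 * α


set_option linter.deprecated false

def WellFounded.rank {α : Type u} {r : α → α → Prop} (hwf : WellFounded r) (a : α) :
    Ordinal.{u} :=
  (hwf.apply a).rank

theorem WellFounded.rank_eq {α : Type u} {r : α → α → Prop} (hwf : WellFounded r) (a : α) :
    hwf.rank a = ⨆ b : { b // r b a }, Order.succ (hwf.rank b) := by
  unfold WellFounded.rank
  rw [Acc.rank_eq]

theorem WellFounded.rank_lt_of_rel {α : Type u} {r : α → α → Prop} (hwf : WellFounded r)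
    {a b : α} (h : r a b) : hwf.rank a < hwf.rank b :=
  Acc.rank_lt_of_rel _ h

namespace S7
open Ordinal

/-! ### Generic rank lemmas -/

section RankGeneric

variable {T : Type} {lt : T → T → Prop} (wf : WellFounded (Function.swap lt))

lemma rank_succ_le {s t : T} (h : lt s t) : wf.rank t + 1 ≤ wf.rank s := by
  rw [Ordinal.add_one_eq_succ, Order.succ_le_iff]
  exact wf.rank_lt_of_rel (r := Function.swap lt) h

lemma exists_succ_of_succ_le {s : T} {β : Ordinal} (h : β + 1 ≤ wf.rank s) :
    ∃ t, lt s t ∧ β ≤ wf.rank t := by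
  by_contra hc
  push_neg at hc
  have : wf.rank s ≤ β := by
    rw [wf.rank_eq]
    apply Ordinal.iSup_le_iff.2
    rintro ⟨b, hb⟩
    have := hc b hb
    exact Order.succ_le_iff.2 (lt_of_le_of_lt (le_refl _) this) |>.trans (le_refl β) |>.trans
      (le_refl β)
  exact absurd (h.trans this) (by rw [Ordinal.add_one_eq_succ]; exact not_le.2 (Order.lt_succ β))

lemma rhoRel_eq_of_wf : rhoRel lt = ⨆ s, Order.succ (wf.rank s) := by
  rw [rhoRel]
  exact dif_pos wf

lemma rank_succ_le_rhoRel (s : T) : wf.rank s + 1 ≤ rhoRel lt := by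
  rw [rhoRel_eq_of_wf wf, Ordinal.add_one_eq_succ]
  exact Ordinal.le_iSup (fun s => Order.succ (wf.rank s)) s

/-- rank monotonicity along strictly monotone maps between trees -/
lemma rank_le_of_monotone {T' : Type} {lt' : T' → T' → Prop}
    (wf' : WellFounded (Function.swap lt')) (f : T → T')
    (hf : ∀ a b, lt a b → lt' (f a) (f b)) (a : T) : wf.rank a ≤ wf'.rank (f a) := by
  induction a using WellFounded.induction wf with
  | _ a ih =>
    rw [wf.rank_eq]
    apply Ordinal.iSup_le_iff.2
    rintro ⟨b, hb⟩
    have h1 : wf.rank b ≤ wf'.rank (f b) := ih b hb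
    have h2 : wf'.rank (f b) < wf'.rank (f a) :=
      wf'.rank_lt_of_rel (r := Function.swap lt') (hf a b hb)
    exact Order.succ_le_iff.2 (lt_of_le_of_lt h1 h2)

end RankGeneric

end S7
namespace S7

variable {G : Type} [Group G] [TopologicalSpace G]

/-- The sigma space `X(𝒢)`. -/
abbrev XS (𝒢 : Dgnb G) : Type := Σ k : ℕ, G ⧸ 𝒢.seq k

/-- The relation sequence used in `rhoDgnb`. -/
def ES (𝒢 : Dgnb G) : ℕ → XS 𝒢 → XS 𝒢 → Prop :=
  fun n p q => ∃ g ∈ 𝒢.seq n, q = ⟨p.1, g • p.2⟩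

lemma rhoDgnb_eq (𝒢 : Dgnb G) : rhoDgnb 𝒢 = rhoRel (nodeLT (ES 𝒢)) := rfl

/-- Orbit set of `p` at level `n`. -/
def orbS (𝒢 : Dgnb G) (n : ℕ) (p : XS 𝒢) : Set (XS 𝒢) := {q | ES 𝒢 n p q}

lemma mem_orbS_iff {𝒢 : Dgnb G} {n : ℕ} {p q : XS 𝒢} :
    q ∈ orbS 𝒢 n p ↔ ∃ g ∈ 𝒢.seq n, q = ⟨p.1, g • p.2⟩ := Iff.rfl

lemma mem_orbS_self {𝒢 : Dgnb G} (n : ℕ) (p : XS 𝒢) : p ∈ orbS 𝒢 n p :=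
  ⟨1, one_mem _, by simp⟩

lemma seq_antitone (𝒢 : Dgnb G) : Antitone 𝒢.seq :=
  antitone_nat_of_succ_le 𝒢.antitone

lemma orbS_antitone {𝒢 : Dgnb G} {n m : ℕ} (h : n ≤ m) (p : XS 𝒢) :
    orbS 𝒢 m p ⊆ orbS 𝒢 n p := by
  rintro q ⟨g, hg, rfl⟩
  exact ⟨g, seq_antitone 𝒢 h hg, rfl⟩

lemma fst_eq_of_mem_orbS {𝒢 : Dgnb G} {n : ℕ} {p q : XS 𝒢} (h : q ∈ orbS 𝒢 n p) :
    q.1 = p.1 := by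
  obtain ⟨g, hg, rfl⟩ := h
  rfl

lemma orbS_eq_of_mem {𝒢 : Dgnb G} {n : ℕ} {p q : XS 𝒢} (h : q ∈ orbS 𝒢 n p) :
    orbS 𝒢 n q = orbS 𝒢 n p := by
  obtain ⟨g, hg, rfl⟩ := h
  ext r
  constructor
  · rintro ⟨h', hh', rfl⟩
    exact ⟨h' * g, mul_mem hh' hg, by simp [mul_smul]⟩
  · rintro ⟨h', hh', rfl⟩
    refine ⟨h' * g⁻¹, mul_mem hh' (inv_mem hg), ?_⟩
    simp [mul_smul]

/-- Nonsingleton-ness of an orbit. -/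
def orbNS (𝒢 : Dgnb G) (n : ℕ) (p : XS 𝒢) : Prop := ∃ q ∈ orbS 𝒢 n p, q ≠ p

lemma orbNS_iff_ne_singleton {𝒢 : Dgnb G} {n : ℕ} {p : XS 𝒢} :
    orbNS 𝒢 n p ↔ orbS 𝒢 n p ≠ {p} := by
  constructor
  · rintro ⟨q, hq, hne⟩ h
    rw [h] at hq
    exact hne hq
  · intro h
    by_contra hc
    unfold orbNS at hc
    push_neg at hc
    apply h
    apply Set.eq_singleton_iff_unique_mem.2
    exact ⟨mem_orbS_self n p, fun q hq => hc q hq⟩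

/-- Node constructor. -/
def nodeMk (𝒢 : Dgnb G) (n : ℕ) (p : XS 𝒢) (h : orbNS 𝒢 n p) : TreeNode (XS 𝒢) (ES 𝒢) :=
  ⟨(n, orbS 𝒢 n p), p, rfl, orbNS_iff_ne_singleton.1 h⟩

@[simp] lemma nodeMk_lvl (𝒢 : Dgnb G) (n : ℕ) (p : XS 𝒢) (h) :
    (nodeMk 𝒢 n p h).1.1 = n := rfl

@[simp] lemma nodeMk_set (𝒢 : Dgnb G) (n : ℕ) (p : XS 𝒢) (h) :
    (nodeMk 𝒢 n p h).1.2 = orbS 𝒢 n p := rfl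

/-- Every node is of the form `nodeMk`. -/
lemma node_eq_nodeMk {𝒢 : Dgnb G} (t : TreeNode (XS 𝒢) (ES 𝒢)) :
    ∃ (p : XS 𝒢) (h : orbNS 𝒢 t.1.1 p), t = nodeMk 𝒢 t.1.1 p h := by
  obtain ⟨⟨n, C⟩, p, hset, hne⟩ := t
  have hset' : C = orbS 𝒢 n p := hset
  subst hset'
  exact ⟨p, orbNS_iff_ne_singleton.2 hne, rfl⟩

lemma nodeLT_nodeMk {𝒢 : Dgnb G} {n m : ℕ} {p q : XS 𝒢} {hp hq} (hnm : n < m)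
    (hsub : orbS 𝒢 m q ⊆ orbS 𝒢 n p) :
    nodeLT (ES 𝒢) (nodeMk 𝒢 n p hp) (nodeMk 𝒢 m q hq) := ⟨hnm, hsub⟩

end S7
set_option linter.unusedSectionVars false
namespace S7

variable {G : Type} [Group G] [TopologicalSpace G]

lemma orbS_sub_of_mem {𝒢 : Dgnb G} {m m' : ℕ} {p q : XS 𝒢} (hm : m ≤ m')
    (h : q ∈ orbS 𝒢 m p) : orbS 𝒢 m' q ⊆ orbS 𝒢 m p := by
  rw [← orbS_eq_of_mem h]
  exact orbS_antitone hm q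

lemma exists_seq_le (𝒢 : Dgnb G) (H : Subgroup G) (hH : IsOpen (H : Set G)) :
    ∃ n, (𝒢.seq n : Set G) ⊆ H :=
  𝒢.basis H (hH.mem_nhds (one_mem H))

/-- interleaving function: `𝒢.seq (nuF 𝒢 𝒢' m) ≤ 𝒢'.seq m`. -/
def nuF (𝒢 𝒢' : Dgnb G) : ℕ → ℕ := fun m =>
  (exists_seq_le 𝒢 (𝒢'.seq m) (𝒢'.isOpen m)).choose

lemma nuF_spec (𝒢 𝒢' : Dgnb G) (m : ℕ) :
    ((𝒢.seq (nuF 𝒢 𝒢' m) : Set G)) ⊆ (𝒢'.seq m : Set G) :=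
  (exists_seq_le 𝒢 (𝒢'.seq m) (𝒢'.isOpen m)).choose_spec

/-- mk-coset ne transfer: if cosets differ mod a bigger subgroup they differ mod the smaller. -/
lemma mk_ne_transfer {B A : Subgroup G} (h : (B : Set G) ⊆ A) {x y : G}
    (hne : (QuotientGroup.mk x : G ⧸ A) ≠ QuotientGroup.mk y) :
    (QuotientGroup.mk x : G ⧸ B) ≠ QuotientGroup.mk y := by
  intro he
  exact hne (QuotientGroup.eq.2 (h (QuotientGroup.eq.1 he)))

lemma smul_mk_sigma {𝒢 : Dgnb G} {k : ℕ} (g a : G) :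
    (⟨k, a • (QuotientGroup.mk g : G ⧸ 𝒢.seq k)⟩ : XS 𝒢)
      = ⟨k, (QuotientGroup.mk (a * g) : G ⧸ 𝒢.seq k)⟩ := rfl

/-- membership of translated basepoint. -/
lemma mk_mul_mem_orbS {𝒢 : Dgnb G} {k n : ℕ} {a : G} (ha : a ∈ 𝒢.seq n) (g : G) :
    (⟨k, (QuotientGroup.mk (a * g) : G ⧸ 𝒢.seq k)⟩ : XS 𝒢)
      ∈ orbS 𝒢 n ⟨k, QuotientGroup.mk g⟩ :=
  ⟨a, ha, rfl⟩

/-- every element of an orbit of a `mk g` basepoint has the form `mk (a*g)`. -/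
lemma mem_orbS_mk {𝒢 : Dgnb G} {k n : ℕ} {g : G} {q : XS 𝒢}
    (h : q ∈ orbS 𝒢 n ⟨k, QuotientGroup.mk g⟩) :
    ∃ a ∈ 𝒢.seq n, q = ⟨k, (QuotientGroup.mk (a * g) : G ⧸ 𝒢.seq k)⟩ := by
  obtain ⟨a, ha, rfl⟩ := h
  exact ⟨a, ha, rfl⟩

/-- Nonsingleton transfer from the `𝒢`-orbit to the `𝒢'`-orbit. -/
lemma nsTransfer {𝒢 𝒢' : Dgnb G} {k K n m : ℕ}
    (hKk : (𝒢'.seq K : Set G) ⊆ (𝒢.seq k : Set G))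
    (hnm : (𝒢.seq n : Set G) ⊆ (𝒢'.seq m : Set G)) (g : G)
    (h : orbNS 𝒢 n ⟨k, QuotientGroup.mk g⟩) : orbNS 𝒢' m ⟨K, QuotientGroup.mk g⟩ := by
  obtain ⟨q, hq, hne⟩ := h
  obtain ⟨a, ha, rfl⟩ := mem_orbS_mk hq
  have hne' : (QuotientGroup.mk (a * g) : G ⧸ 𝒢.seq k) ≠ QuotientGroup.mk g := by
    intro he
    exact hne (by rw [he])
  have ham : a ∈ 𝒢'.seq m := hnm ha
  refine ⟨⟨K, QuotientGroup.mk (a * g)⟩, mk_mul_mem_orbS ham g, ?_⟩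
  intro he
  apply mk_ne_transfer hKk hne'
  injection he with h1 h2

/-- Walking lemma: find deep descendants at high levels. -/
lemma walk {𝒢 : Dgnb G} (wf : WellFounded (Function.swap (nodeLT (ES 𝒢)))) (α : Ordinal) :
    ∀ (s : ℕ) (t : TreeNode (XS 𝒢) (ES 𝒢)), α + (s : Ordinal) ≤ wf.rank t →
    ∃ t', t.1.1 + s ≤ t'.1.1 ∧ t'.1.2 ⊆ t.1.2 ∧ α ≤ wf.rank t' := by
  intro s
  induction s with
  | zero => intro t h; exact ⟨t, by simp, subset_rfl, by simpa using h⟩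
  | succ s ih =>
    intro t h
    have h' : (α + s) + 1 ≤ wf.rank t := by
      rw [add_assoc]
      simpa [Nat.cast_add] using h
    obtain ⟨u, htu, hu⟩ := exists_succ_of_succ_le wf h'
    obtain ⟨t', h1, h2, h3⟩ := ih u hu
    exact ⟨t', by have := htu.1; omega, h2.trans htu.2, h3⟩

/-- budget function -/
def bud (ν : ℕ → ℕ) : ℕ → ℕ → ℕ → ℕ
  | 0, _, _ => 0
  | r+1, m, n => (max (ν (m+1) - n) 1) + bud ν r (m+1) (n + max (ν (m+1) - n) 1)

lemma bud_antitone (ν : ℕ → ℕ) : ∀ (r m : ℕ) {n n' : ℕ}, n ≤ n' →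
    bud ν r m n' ≤ bud ν r m n := by
  intro r
  induction r with
  | zero => intro m n n' _; simp [bud]
  | succ r ih =>
    intro m n n' hnn
    have h1 : max (ν (m+1) - n') 1 ≤ max (ν (m+1) - n) 1 := by omega
    have h2 : n + max (ν (m+1) - n) 1 ≤ n' + max (ν (m+1) - n') 1 := by omega
    exact Nat.add_le_add h1 (ih (m+1) h2)

end S7
namespace S7
open Ordinal

variable {G : Type} [Group G] [TopologicalSpace G]

lemma inner (𝒢 𝒢' : Dgnb G)
    (wfA : WellFounded (Function.swap (nodeLT (ES 𝒢))))
    (wfB : WellFounded (Function.swap (nodeLT (ES 𝒢')))) :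
    ∀ (δ : Ordinal) (r k K : ℕ)
      (hKk : (𝒢'.seq K : Set G) ⊆ (𝒢.seq k : Set G)) (n m : ℕ)
      (hnm : (𝒢.seq n : Set G) ⊆ (𝒢'.seq m : Set G)) (g : G)
      (hA : orbNS 𝒢 n ⟨k, QuotientGroup.mk g⟩),
      Ordinal.omega0 * δ + (bud (nuF 𝒢 𝒢') r m n : Ordinal) ≤
        wfA.rank (nodeMk 𝒢 n ⟨k, QuotientGroup.mk g⟩ hA) →
      Ordinal.omega0 * δ + (r : Ordinal) ≤
        wfB.rank (nodeMk 𝒢' m ⟨K, QuotientGroup.mk g⟩ (nsTransfer hKk hnm g hA)) := by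
  intro δ
  induction δ using Ordinal.induction with
  | _ δ ihδ =>
  intro r
  induction r with
  | zero =>
    intro k K hKk n m hnm g hA hrk
    simp only [bud, Nat.cast_zero, add_zero] at hrk ⊢
    rcases eq_or_ne δ 0 with rfl | hδ
    · simp
    · apply le_of_forall_lt
      intro c hc
      have hδ' : c / Ordinal.omega0 < δ := (Ordinal.div_lt Ordinal.omega0_ne_zero).2 hc
      obtain ⟨r', hr'⟩ := Ordinal.lt_omega0.1 (Ordinal.mod_lt c Ordinal.omega0_ne_zero)
      have hc2 : c < Ordinal.omega0 * (c / Ordinal.omega0) + ((r' + 1 : ℕ) : Ordinal) := by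
        conv_lhs => rw [← Ordinal.div_add_mod c Ordinal.omega0]
        rw [hr']
        apply add_lt_add_right
        exact_mod_cast Nat.lt_succ_self r'
      refine hc2.trans_le (ihδ _ hδ' (r' + 1) k K hKk n m hnm g hA ?_)
      calc Ordinal.omega0 * (c / Ordinal.omega0)
            + ((bud (nuF 𝒢 𝒢') (r' + 1) m n : ℕ) : Ordinal)
          ≤ Ordinal.omega0 * (c / Ordinal.omega0) + Ordinal.omega0 :=
            le_of_lt (add_lt_add_right (Ordinal.nat_lt_omega0 _) _)
        _ = Ordinal.omega0 * Order.succ (c / Ordinal.omega0) := (Ordinal.mul_succ _ _).symm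
        _ ≤ Ordinal.omega0 * δ := mul_le_mul_right (Order.succ_le_iff.2 hδ') _
        _ ≤ _ := hrk
  | succ r ihr =>
    intro k K hKk n m hnm g hA hrk
    set ν := nuF 𝒢 𝒢' with hν
    set s := max (ν (m+1) - n) 1 with hs
    -- rewrite the budget
    have hb : (bud ν (r+1) m n : Ordinal) = (bud ν r (m+1) (n+s) : Ordinal) + (s : Ordinal) := by
      have h1 : bud ν (r+1) m n = bud ν r (m+1) (n+s) + s := by
        simp [bud, ← hs, Nat.add_comm]
      rw [h1, Nat.cast_add]
    rw [hb, ← add_assoc] at hrk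
    -- walk
    obtain ⟨t', hlvl, hsub, hrank'⟩ := walk wfA _ s _ hrk
    obtain ⟨p₁, h₁, ht'⟩ := node_eq_nodeMk t'
    have hp₁mem : p₁ ∈ orbS 𝒢 n ⟨k, QuotientGroup.mk g⟩ := by
      apply hsub
      conv_lhs => rw [ht']
      exact mem_orbS_self _ _
    obtain ⟨a, ha, hpeq⟩ := mem_orbS_mk hp₁mem
    subst hpeq
    have hlvl' : n + s ≤ t'.1.1 := by simpa using hlvl
    have hnsle : ν (m+1) ≤ n + s := by omega
    have hnm₁ : (𝒢.seq t'.1.1 : Set G) ⊆ (𝒢'.seq (m+1) : Set G) := by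
      refine subset_trans ?_ (nuF_spec 𝒢 𝒢' (m+1))
      exact_mod_cast SetLike.coe_subset_coe.2 (seq_antitone 𝒢 (le_trans hnsle hlvl'))
    have hrank₁ : Ordinal.omega0 * δ + ((bud ν r (m+1) t'.1.1 : ℕ) : Ordinal) ≤
        wfA.rank (nodeMk 𝒢 t'.1.1 ⟨k, QuotientGroup.mk (a * g)⟩ h₁) := by
      rw [← ht']
      refine le_trans ?_ hrank'
      apply add_le_add_right
      exact_mod_cast bud_antitone ν r (m+1) hlvl'
    have hmain := ihr k K hKk t'.1.1 (m+1) hnm₁ (a * g) h₁ hrank₁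
    -- step down in the B-tree
    have hBmem : (⟨K, QuotientGroup.mk (a * g)⟩ : XS 𝒢') ∈
        orbS 𝒢' m ⟨K, QuotientGroup.mk g⟩ := mk_mul_mem_orbS (hnm ha) g
    have hstep : nodeLT (ES 𝒢')
        (nodeMk 𝒢' m ⟨K, QuotientGroup.mk g⟩ (nsTransfer hKk hnm g hA))
        (nodeMk 𝒢' (m+1) ⟨K, QuotientGroup.mk (a * g)⟩ (nsTransfer hKk hnm₁ (a*g) h₁)) :=
      nodeLT_nodeMk (Nat.lt_succ_self m) (orbS_sub_of_mem (Nat.le_succ m) hBmem)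
    have hfin := rank_succ_le wfB hstep
    calc Ordinal.omega0 * δ + ((r + 1 : ℕ) : Ordinal)
        = (Ordinal.omega0 * δ + (r : ℕ)) + 1 := by rw [Nat.cast_add, Nat.cast_one, add_assoc]
      _ ≤ wfB.rank (nodeMk 𝒢' (m+1) ⟨K, QuotientGroup.mk (a * g)⟩
            (nsTransfer hKk hnm₁ (a*g) h₁)) + 1 := add_le_add_left hmain 1
      _ ≤ _ := hfin

end S7
namespace S7
open Ordinal

/-! ### omegaPart lemmas -/

lemma omegaPart_set_nonempty (a : Ordinal) :
    {b : Ordinal | (b = 0 ∨ (b ≠ 0 ∧ ∀ c < b, Order.succ c < b)) ∧ b ≤ a}.Nonempty :=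
  ⟨0, Or.inl rfl, zero_le⟩

lemma omegaPart_set_bdd (a : Ordinal) :
    BddAbove {b : Ordinal | (b = 0 ∨ (b ≠ 0 ∧ ∀ c < b, Order.succ c < b)) ∧ b ≤ a} :=
  ⟨a, fun _ hb => hb.2⟩

lemma omegaPart_le_self (a : Ordinal) : omegaPart a ≤ a :=
  csSup_le (omegaPart_set_nonempty a) fun _ hb => hb.2

lemma isLim_iff {b : Ordinal} :
    (b ≠ 0 ∧ ∀ c < b, Order.succ c < b) ↔ Order.IsSuccLimit b := by
  rw [Ordinal.isSuccLimit_iff, Order.isSuccPrelimit_iff_succ_lt]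

lemma le_omegaPart {l a : Ordinal} (hl : Order.IsSuccLimit l) (h : l ≤ a) : l ≤ omegaPart a :=
  le_csSup (omegaPart_set_bdd a) ⟨Or.inr (isLim_iff.2 hl), h⟩

lemma omegaPart_zero_or_limit (a : Ordinal) :
    omegaPart a = 0 ∨ Order.IsSuccLimit (omegaPart a) := by
  rcases Ordinal.zero_or_succ_or_isSuccLimit (omegaPart a) with h | ⟨c, hc'⟩ | h
  · exact Or.inl h
  · exfalso
    have hc := hc'.symm
    have hlt : c < omegaPart a := by rw [hc]; exact Order.lt_succ c
    obtain ⟨b, hbS, hcb⟩ := exists_lt_of_lt_csSup (omegaPart_set_nonempty a) hlt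
    have hble : b ≤ omegaPart a := le_csSup (omegaPart_set_bdd a) hbS
    have hbeq : b = Order.succ c := le_antisymm (hc ▸ hble) (Order.succ_le_iff.2 hcb)
    rcases hbS.1 with h0 | hl
    · exact Ordinal.succ_ne_zero c (hbeq ▸ h0)
    · exact Order.not_isSuccLimit_succ c (hbeq ▸ isLim_iff.1 hl)
  · exact Or.inr h

lemma add_nat_lt_of_limit {l μ : Ordinal} (hl : Order.IsSuccLimit l) (h : μ < l) (j : ℕ) :
    μ + (j : Ordinal) < l := by
  induction j with
  | zero => simpa using h
  | succ j ih =>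
    have : μ + ((j:ℕ) + 1 : ℕ) = Order.succ (μ + j) := by
      rw [Nat.cast_add, Nat.cast_one, ← add_assoc, Ordinal.add_one_eq_succ]
    rw [this]
    exact hl.succ_lt ih

lemma add_omega0_le_of_limit {l μ : Ordinal} (hl : Order.IsSuccLimit l) (h : μ < l) :
    μ + Ordinal.omega0 ≤ l := by
  rw [Ordinal.add_le_iff_of_isSuccLimit Ordinal.isSuccLimit_omega0]
  intro b hb
  obtain ⟨j, rfl⟩ := Ordinal.lt_omega0.1 hb
  exact (add_nat_lt_of_limit hl h j).le

/-! ### The one-sided comparison -/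

variable {G : Type} [Group G] [TopologicalSpace G]

lemma rho_le_of_limit (𝒢 𝒢' : Dgnb G)
    (wfA : WellFounded (Function.swap (nodeLT (ES 𝒢))))
    (wfB : WellFounded (Function.swap (nodeLT (ES 𝒢'))))
    {l : Ordinal} (hlim : Order.IsSuccLimit l) (hle : l ≤ rhoDgnb 𝒢) : l ≤ rhoDgnb 𝒢' := by
  apply le_of_forall_lt
  intro β hβ
  set δ := β / Ordinal.omega0 with hδ
  obtain ⟨r', hr'⟩ := Ordinal.lt_omega0.1 (Ordinal.mod_lt β Ordinal.omega0_ne_zero)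
  have hβeq : β = Ordinal.omega0 * δ + (r' : Ordinal) := by
    conv_lhs => rw [← Ordinal.div_add_mod β Ordinal.omega0]
    rw [hr']
  have hμ : Ordinal.omega0 * δ < l := lt_of_le_of_lt (Ordinal.mul_div_le β _) hβ
  set βb := Ordinal.omega0 * δ + ((bud (nuF 𝒢 𝒢') r' 0 0 : ℕ) : Ordinal) with hβb
  have hβbl : βb < l := lt_of_lt_of_le
    (add_lt_add_right (Ordinal.nat_lt_omega0 _) _) (add_omega0_le_of_limit hlim hμ)
  have hβbρ : βb < rhoDgnb 𝒢 := lt_of_lt_of_le hβbl hle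
  rw [rhoDgnb_eq, rhoRel_eq_of_wf wfA, Ordinal.lt_iSup_iff] at hβbρ
  obtain ⟨t, hβbt⟩ := hβbρ
  rw [Order.lt_succ_iff] at hβbt
  -- extract basepoint
  obtain ⟨p, hp, ht⟩ := node_eq_nodeMk t
  obtain ⟨κ, x⟩ := p
  obtain ⟨g, rfl⟩ := QuotientGroup.mk_surjective x
  -- pass to the root node
  have hroot : orbNS 𝒢 0 ⟨κ, QuotientGroup.mk g⟩ := by
    obtain ⟨q, hq, hqne⟩ := hp
    exact ⟨q, orbS_antitone (Nat.zero_le _) _ hq, hqne⟩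
  have hrankroot : βb ≤ wfA.rank (nodeMk 𝒢 0 ⟨κ, QuotientGroup.mk g⟩ hroot) := by
    rcases Nat.eq_zero_or_pos t.1.1 with h0 | hpos
    · have : nodeMk 𝒢 0 (⟨κ, QuotientGroup.mk g⟩ : XS 𝒢) hroot
          = nodeMk 𝒢 t.1.1 ⟨κ, QuotientGroup.mk g⟩ hp := by
        apply Subtype.ext
        show ((0 : ℕ), orbS 𝒢 0 (⟨κ, QuotientGroup.mk g⟩ : XS 𝒢))
            = (t.1.1, orbS 𝒢 t.1.1 (⟨κ, QuotientGroup.mk g⟩ : XS 𝒢))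
        rw [h0]
      rw [this, ← ht]
      exact hβbt
    · have hltn : nodeLT (ES 𝒢) (nodeMk 𝒢 0 ⟨κ, QuotientGroup.mk g⟩ hroot)
          (nodeMk 𝒢 t.1.1 ⟨κ, QuotientGroup.mk g⟩ hp) :=
        nodeLT_nodeMk hpos (orbS_antitone (Nat.zero_le _) _)
      have := rank_succ_le wfA hltn
      rw [← ht] at this
      exact hβbt.trans (le_trans (le_of_lt (lt_of_lt_of_le (lt_add_one _) (by simpa using this)))
        (le_refl _))
  obtain ⟨K, hKk⟩ := exists_seq_le 𝒢' (𝒢.seq κ) (𝒢.isOpen κ)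
  have hnm0 : (𝒢.seq 0 : Set G) ⊆ (𝒢'.seq 0 : Set G) := by
    rw [𝒢'.zero_eq_top]
    intro y _
    exact Subgroup.mem_top y
  have hmain := inner 𝒢 𝒢' wfA wfB δ r' κ K hKk 0 0 hnm0 g hroot hrankroot
  have hfin := rank_succ_le_rhoRel wfB (nodeMk 𝒢' 0 ⟨K, QuotientGroup.mk g⟩
    (nsTransfer hKk hnm0 g hroot))
  rw [rhoDgnb_eq]
  calc β = Ordinal.omega0 * δ + (r' : Ordinal) := hβeq
    _ < Ordinal.omega0 * δ + (r' : Ordinal) + 1 := lt_add_one _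
    _ ≤ _ + 1 := add_le_add_left hmain 1
    _ ≤ _ := hfin

lemma omegaPart_rho_le (𝒢 𝒢' : Dgnb G)
    (wfA : WellFounded (Function.swap (nodeLT (ES 𝒢))))
    (wfB : WellFounded (Function.swap (nodeLT (ES 𝒢')))) :
    omegaPart (rhoDgnb 𝒢) ≤ omegaPart (rhoDgnb 𝒢') := by
  rcases omegaPart_zero_or_limit (rhoDgnb 𝒢) with h0 | hlim
  · rw [h0]; exact zero_le
  · exact le_omegaPart hlim
      (rho_le_of_limit 𝒢 𝒢' wfA wfB hlim (omegaPart_le_self _))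

end S7
namespace S7
open Filter

variable {G : Type} [Group G] [TopologicalSpace G] [IsTopologicalGroup G]

lemma cli_wf (hcli : IsCLI G) (𝒢 : Dgnb G) :
    WellFounded (Function.swap (nodeLT (ES 𝒢))) := by
  obtain ⟨m, hmtop, hmcomp, hminv⟩ := hcli
  haveI : IsIrrefl (TreeNode (XS 𝒢) (ES 𝒢)) (Function.swap (nodeLT (ES 𝒢))) :=
    ⟨fun t h => lt_irrefl _ h.1⟩
  haveI : IsTrans (TreeNode (XS 𝒢) (ES 𝒢)) (Function.swap (nodeLT (ES 𝒢))) :=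
    ⟨fun a b c hab hbc => ⟨lt_trans hbc.1 hab.1, hab.2.trans hbc.2⟩⟩
  haveI : IsStrictOrder (TreeNode (XS 𝒢) (ES 𝒢)) (Function.swap (nodeLT (ES 𝒢))) := ⟨⟩
  rw [RelEmbedding.wellFounded_iff_isEmpty]
  constructor
  intro f
  have hstep : ∀ i : ℕ, nodeLT (ES 𝒢) (f i) (f (i + 1)) := fun i =>
    f.map_rel_iff.2 (Nat.lt_succ_self i)
  -- basepoints
  have hxw : ∀ i, ∃ p : XS 𝒢, orbNS 𝒢 (f i).1.1 p ∧ (f i).1.2 = orbS 𝒢 (f i).1.1 p := by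
    intro i
    obtain ⟨p, h, ht⟩ := node_eq_nodeMk (f i)
    exact ⟨p, h, by rw [ht]; rfl⟩
  choose pt hNS hset using hxw
  set lvl : ℕ → ℕ := fun i => (f i).1.1 with hlvl
  have hlvlmono : StrictMono lvl := strictMono_nat_of_lt_succ fun i => (hstep i).1
  have le_lvl : ∀ i, i ≤ lvl i := fun i => hlvlmono.le_apply
  have hmem : ∀ i, pt (i + 1) ∈ orbS 𝒢 (lvl i) (pt i) := by
    intro i
    rw [← hset i]
    apply (hstep i).2
    rw [hset (i + 1)]
    exact mem_orbS_self _ _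
  set k0 := (pt 0).1 with hk0
  obtain ⟨g0, hg0⟩ : ∃ g : G, pt 0 = ⟨k0, QuotientGroup.mk g⟩ := by
    obtain ⟨g, hg⟩ := QuotientGroup.mk_surjective (pt 0).2
    refine ⟨g, ?_⟩
    rw [hg]
  have step : ∀ i (g : G), pt i = ⟨k0, QuotientGroup.mk g⟩ →
      ∃ a, a ∈ 𝒢.seq (lvl i) ∧ pt (i + 1) = ⟨k0, QuotientGroup.mk (a * g)⟩ := by
    intro i g hg
    have h2 := hmem i
    rw [hg] at h2
    obtain ⟨a, ha, he⟩ := mem_orbS_mk h2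
    exact ⟨a, ha, he⟩
  let gs : ∀ i : ℕ, {g : G // pt i = ⟨k0, QuotientGroup.mk g⟩} := fun i =>
    Nat.rec ⟨g0, hg0⟩
      (fun j prev => ⟨Classical.choose (step j prev.1 prev.2) * prev.1,
        (Classical.choose_spec (step j prev.1 prev.2)).2⟩) i
  have hrel : ∀ j, ∃ a ∈ 𝒢.seq (lvl j), (gs (j + 1)).1 = a * (gs j).1 := fun j =>
    ⟨Classical.choose (step j (gs j).1 (gs j).2),
      (Classical.choose_spec (step j (gs j).1 (gs j).2)).1, rfl⟩
  have hprod : ∀ i j, i ≤ j → (gs j).1 * ((gs i).1)⁻¹ ∈ 𝒢.seq (lvl i) := by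
    intro i j hij
    induction j, hij using Nat.le_induction with
    | base => simpa using one_mem _
    | succ j hij ih =>
      obtain ⟨a, ha, hrel'⟩ := hrel j
      rw [hrel', mul_assoc]
      exact mul_mem (seq_antitone 𝒢 (hlvlmono.monotone hij) ha) ih
  -- the Cauchy sequence
  set w : ℕ → G := fun i => ((gs i).1)⁻¹ with hw
  have hdistw : ∀ i j, i ≤ j → m.dist (w j) (w i) =
      m.dist (((gs j).1 * ((gs i).1)⁻¹)⁻¹) 1 := by
    intro i j _
    have h1 : w j = ((gs i).1)⁻¹ * ((gs j).1 * ((gs i).1)⁻¹)⁻¹ := by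
      simp [hw, mul_assoc]
    have h2 : w i = ((gs i).1)⁻¹ * 1 := by simp [hw]
    rw [h1, h2, hminv]
  have hcauchy : @CauchySeq G ℕ m.toUniformSpace _ w := by
    refine (@Metric.cauchySeq_iff' G ℕ m.toPseudoMetricSpace _ _ w).2 ?_
    intro ε hε
    have hball : IsOpen {x : G | m.dist x 1 < ε} := by
      have h1 : @IsOpen G (m.toUniformSpace.toTopologicalSpace) {x : G | m.dist x 1 < ε} :=
        @Metric.isOpen_ball G m.toPseudoMetricSpace 1 ε
      rwa [hmtop] at h1
    have hmem1 : (1 : G) ∈ {x : G | m.dist x 1 < ε} := by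
      have : m.dist 1 1 = 0 := @dist_self G m.toPseudoMetricSpace 1
      simp only [Set.mem_setOf_eq, this]
      exact hε
    obtain ⟨nb, hnb⟩ := 𝒢.basis _ (hball.mem_nhds hmem1)
    refine ⟨nb, fun n hn => ?_⟩
    have hq : (gs n).1 * ((gs nb).1)⁻¹ ∈ 𝒢.seq (lvl nb) := hprod nb n hn
    have hq2 : ((gs n).1 * ((gs nb).1)⁻¹)⁻¹ ∈ 𝒢.seq nb :=
      seq_antitone 𝒢 (le_lvl nb) (inv_mem hq)
    have hfin := hnb hq2
    rw [Set.mem_setOf_eq] at hfin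
    show m.dist (w n) (w nb) < ε
    rw [hdistw nb n hn]
    exact hfin
  obtain ⟨a, ha⟩ := @cauchySeq_tendsto_of_complete G ℕ m.toUniformSpace inferInstance
    hmcomp w hcauchy
  rw [hmtop] at ha
  -- translate back to g's
  set c : G := a⁻¹ with hc
  have hgtend : Tendsto (fun i => (gs i).1) atTop (nhds c) := by
    have := ha.inv
    simpa [hw] using this
  -- eventually constant coset
  have hVopen : IsOpen {x : G | c⁻¹ * x ∈ (𝒢.seq k0 : Set G)} := by
    exact (𝒢.isOpen k0).preimage (continuous_const.mul continuous_id)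
  have hcV : c ∈ {x : G | c⁻¹ * x ∈ (𝒢.seq k0 : Set G)} := by
    simp only [Set.mem_setOf_eq, inv_mul_cancel]
    exact one_mem _
  have hev := hgtend (hVopen.mem_nhds hcV)
  rw [Filter.mem_map, Filter.mem_atTop_sets] at hev
  obtain ⟨I, hI⟩ := hev
  have hptc : ∀ i, I ≤ i → pt i = ⟨k0, QuotientGroup.mk c⟩ := by
    intro i hIi
    have h1 : c⁻¹ * (gs i).1 ∈ 𝒢.seq k0 := hI i hIi
    have h2 : (QuotientGroup.mk ((gs i).1) : G ⧸ 𝒢.seq k0) = QuotientGroup.mk c := by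
      symm
      exact QuotientGroup.eq.2 h1
    rw [(gs i).2, h2]
  -- stabilizer
  have hSopen : IsOpen {u : G | c⁻¹ * u * c ∈ (𝒢.seq k0 : Set G)} := by
    exact (𝒢.isOpen k0).preimage
      ((continuous_const.mul continuous_id).mul continuous_const)
  have hS1 : (1 : G) ∈ {u : G | c⁻¹ * u * c ∈ (𝒢.seq k0 : Set G)} := by
    simp only [Set.mem_setOf_eq, mul_one, inv_mul_cancel]
    exact one_mem _
  obtain ⟨ns, hns⟩ := 𝒢.basis _ (hSopen.mem_nhds hS1)
  -- contradiction
  set i := max I ns with hi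
  have hpti : pt i = ⟨k0, QuotientGroup.mk c⟩ := hptc i (le_max_left _ _)
  obtain ⟨q, hq, hqne⟩ := hNS i
  rw [hpti] at hq
  obtain ⟨u, hu, hque⟩ := mem_orbS_mk hq
  have huinv : u⁻¹ ∈ 𝒢.seq ns := by
    have h1 : u ∈ 𝒢.seq ns :=
      seq_antitone 𝒢 (le_trans (le_max_right I ns) (le_lvl i)) hu
    exact inv_mem h1
  have hfix : (QuotientGroup.mk (u * c) : G ⧸ 𝒢.seq k0) = QuotientGroup.mk c := by
    apply QuotientGroup.eq.2
    have h3 := hns huinv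
    rw [Set.mem_setOf_eq] at h3
    simpa [mul_assoc] using h3
  apply hqne
  rw [hque, hpti, hfix]
end S7
namespace S7
open Ordinal

variable {G : Type} [Group G] [TopologicalSpace G]

lemma countable_coset [IsTopologicalGroup G] [TopologicalSpace.SeparableSpace G] (H : Subgroup G)
    (hH : IsOpen (H : Set G)) : Countable (G ⧸ H) := by
  obtain ⟨D, hDc, hDd⟩ := TopologicalSpace.exists_countable_dense G
  have hsur : ∀ q : G ⧸ H, ∃ d : G, d ∈ D ∧ QuotientGroup.mk d = q := by
    intro q
    obtain ⟨g, rfl⟩ := QuotientGroup.mk_surjective q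
    have hopen : IsOpen {x : G | g⁻¹ * x ∈ (H : Set G)} :=
      hH.preimage (continuous_const.mul continuous_id)
    have hne : ({x : G | g⁻¹ * x ∈ (H : Set G)}).Nonempty :=
      ⟨g, by simp only [Set.mem_setOf_eq, inv_mul_cancel]; exact one_mem _⟩
    obtain ⟨d, hdD, hdU⟩ := hDd.exists_mem_open hopen hne
    exact ⟨d, hdD, (QuotientGroup.eq.2 hdU).symm⟩
  choose df hdf1 hdf2 using hsur
  haveI : Countable D := hDc.to_subtype
  have hinj : Function.Injective (fun q : G ⧸ H => (⟨df q, hdf1 q⟩ : D)) := by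
    intro q1 q2 h
    have h2 : df q1 = df q2 := congrArg Subtype.val h
    rw [← hdf2 q1, ← hdf2 q2, h2]
  exact hinj.countable

lemma countable_nodes [IsTopologicalGroup G] [TopologicalSpace.SeparableSpace G] (𝒢 : Dgnb G) :
    Countable (TreeNode (XS 𝒢) (ES 𝒢)) := by
  haveI : ∀ k : ℕ, Countable (G ⧸ 𝒢.seq k) := fun k => countable_coset _ (𝒢.isOpen k)
  haveI : Countable (XS 𝒢) := inferInstance
  have hinj : Function.Injective (fun t : TreeNode (XS 𝒢) (ES 𝒢) =>
      ((t.1.1, Classical.choose t.2) : ℕ × XS 𝒢)) := by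
    intro t1 t2 h
    have h' : ((t1.1.1, Classical.choose t1.2) : ℕ × XS 𝒢)
        = (t2.1.1, Classical.choose t2.2) := h
    obtain ⟨e1, e2⟩ := Prod.ext_iff.1 h'
    simp only at e1 e2
    have s1 := (Classical.choose_spec t1.2).1
    have s2 := (Classical.choose_spec t2.2).1
    apply Subtype.ext
    have hsets : t1.1.2 = t2.1.2 := by rw [s1, s2, e2, e1]
    calc t1.1 = (t1.1.1, t1.1.2) := rfl
      _ = (t2.1.1, t2.1.2) := by rw [e1, hsets]
      _ = t2.1 := rfl
  exact hinj.countable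

lemma rank_lt_omega1 {T : Type} [Countable T] {r : T → T → Prop} (wf : WellFounded r) (t : T) :
    wf.rank t < (Cardinal.aleph 1).ord := by
  induction t using WellFounded.induction wf with
  | _ t ih =>
    rw [wf.rank_eq]
    apply Ordinal.iSup_lt_ord
    · rw [Cardinal.isRegular_aleph_one.cof_eq]
      exact lt_of_le_of_lt Cardinal.mk_le_aleph0 Cardinal.aleph0_lt_aleph_one
    · rintro ⟨b, hb⟩
      exact (Cardinal.isSuccLimit_ord (Cardinal.aleph0_le_aleph 1)).succ_lt (ih b hb)

lemma rho_lt_omega1 [IsTopologicalGroup G] [TopologicalSpace.SeparableSpace G] (𝒢 : Dgnb G)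
    (wf : WellFounded (Function.swap (nodeLT (ES 𝒢)))) :
    rhoDgnb 𝒢 < (Cardinal.aleph 1).ord := by
  haveI := countable_nodes 𝒢
  rw [rhoDgnb_eq, rhoRel_eq_of_wf wf]
  apply Ordinal.iSup_lt_ord
  · rw [Cardinal.isRegular_aleph_one.cof_eq]
    exact lt_of_le_of_lt Cardinal.mk_le_aleph0 Cardinal.aleph0_lt_aleph_one
  · intro t
    exact (Cardinal.isSuccLimit_ord (Cardinal.aleph0_le_aleph 1)).succ_lt (rank_lt_omega1 wf t)

lemma omegaPart_eq_omega_mul (a : Ordinal) : ∃ β, omegaPart a = Ordinal.omega0 * β := by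
  rcases omegaPart_zero_or_limit a with h | h
  · exact ⟨0, by rw [h, mul_zero]⟩
  · refine ⟨omegaPart a / Ordinal.omega0, ?_⟩
    have hdm := Ordinal.div_add_mod (omegaPart a) Ordinal.omega0
    obtain ⟨n, hn⟩ := Ordinal.lt_omega0.1 (Ordinal.mod_lt (omegaPart a) Ordinal.omega0_ne_zero)
    cases n with
    | zero =>
      rw [hn] at hdm
      simpa using hdm.symm
    | succ n' =>
      exfalso
      have hsucc : omegaPart a =
          Order.succ (Ordinal.omega0 * (omegaPart a / Ordinal.omega0) + (n' : Ordinal)) := by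
        conv_lhs => rw [← hdm, hn]
        push_cast
        rw [← add_assoc, Ordinal.add_one_eq_succ]
      exact Order.not_isSuccLimit_succ _ (hsucc ▸ h)

end S7

theorem statement_7 (G : Type) [Group G] [TopologicalSpace G] [IsTopologicalGroup G]
    [PolishSpace G] (hna : IsNonArch G) (hcli : IsCLI G) (𝒢 𝒢' : Dgnb G) :
    omegaPart (rhoDgnb 𝒢) = omegaPart (rhoDgnb 𝒢') ∧
    ∃! β : Ordinal, β < (Cardinal.aleph 1).ord ∧
      ∀ ℋ : Dgnb G, omegaPart (rhoDgnb ℋ) = Ordinal.omega0 * β := by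
  have wf : ∀ ℋ : Dgnb G, WellFounded (Function.swap (nodeLT (S7.ES ℋ))) :=
    fun ℋ => S7.cli_wf hcli ℋ
  have inv : ∀ ℋ₁ ℋ₂ : Dgnb G, omegaPart (rhoDgnb ℋ₁) = omegaPart (rhoDgnb ℋ₂) :=
    fun a b => le_antisymm (S7.omegaPart_rho_le a b (wf a) (wf b))
      (S7.omegaPart_rho_le b a (wf b) (wf a))
  obtain ⟨β, hβ⟩ := S7.omegaPart_eq_omega_mul (rhoDgnb 𝒢)
  have hρlt : rhoDgnb 𝒢 < (Cardinal.aleph 1).ord := S7.rho_lt_omega1 𝒢 (wf 𝒢)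
  have hβlt : β < (Cardinal.aleph 1).ord := by
    refine lt_of_le_of_lt ?_ hρlt
    calc β = 1 * β := (one_mul β).symm
      _ ≤ Ordinal.omega0 * β := mul_le_mul_left Ordinal.one_lt_omega0.le β
      _ = omegaPart (rhoDgnb 𝒢) := hβ.symm
      _ ≤ rhoDgnb 𝒢 := S7.omegaPart_le_self _
  refine ⟨inv 𝒢 𝒢', β, ⟨hβlt, fun ℋ => (inv ℋ 𝒢).trans hβ⟩, ?_⟩
  rintro β' ⟨hβ'lt, hβ'⟩
  have h1 : Ordinal.omega0 * β' = Ordinal.omega0 * β := by rw [← hβ' 𝒢, hβ]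
  by_contra hne
  rcases lt_or_gt_of_ne hne with h | h
  · exact absurd h1 (ne_of_lt ((mul_lt_mul_iff_right₀ Ordinal.omega0_pos).2 h))
  · exact absurd h1.symm (ne_of_lt ((mul_lt_mul_iff_right₀ Ordinal.omega0_pos).2 h))

end
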